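/- arXiv:0912.2514 — 6 statements merged into one kernel-verified Lean document; each statement's English description precedes it below -/
import Mathlib

section
/- For a sofic shift X and any right-ray x⁺ = x₁x₂x₃… in X⁺, there exists n ∈ ℕ such that the predecessor set of the finite prefix x₁…x_k equals the predecessor set of the infinite right-ray x⁺ for all k ≥ n. -/
/-- The shift map on bi-infinite sequences. -/
def shiftZ {A : Type*} (p : ℤ → A) : ℤ → A := fun i => p (i + 1)

/-- Concatenation `y⁻x⁺` of a left-ray `y` (where `y 0` is the symbol at position `-1`,
`y 1` at position `-2`, …) and a right-ray `x` (where `x n` is the symbol at position `n`). -/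
def concat {A : Type*} (y x : ℕ → A) : ℤ → A :=
  fun i => if 0 ≤ i then x i.toNat else y (-(i + 1)).toNat

/-- The set of right-rays `X⁺` of `X`. -/
def Xplus {A : Type*} (X : Set (ℤ → A)) : Set (ℕ → A) := {x | ∃ y, concat y x ∈ X}

/-- The set of left-rays `X⁻` of `X`. -/
def Xminus {A : Type*} (X : Set (ℤ → A)) : Set (ℕ → A) := {y | ∃ x, concat y x ∈ X}

/-- The predecessor set `P_∞(x⁺)` of a right-ray. -/
def Pray {A : Type*} (X : Set (ℤ → A)) (x : ℕ → A) : Set (ℕ → A) := {y | concat y x ∈ X}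

/-- Append a finite word at the (right) end of a left-ray: the word sits closest to the origin. -/
def leftAppend {A : Type*} (y : ℕ → A) (w : List A) : ℕ → A :=
  fun n => if h : n < w.length then w.reverse.get ⟨n, by simpa using h⟩ else y (n - w.length)

/-- The predecessor set `P_∞(w)` of a finite word: left-rays `y⁻` with `y⁻w ∈ X⁻`. -/
def Pword {A : Type*} (X : Set (ℤ → A)) (w : List A) : Set (ℕ → A) :=
  {y | leftAppend y w ∈ Xminus X}

/-- The prefix `x₁…x_k` of a right-ray. -/
def rayPrefix {A : Type*} (x : ℕ → A) (k : ℕ) : List A := List.ofFn (fun i : Fin k => x i)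

/-- `X` is a shift space: it is cut out by a set of forbidden words. -/
def IsShiftSpace {A : Type*} (X : Set (ℤ → A)) : Prop :=
  ∃ F : Set (List A),
    X = {p : ℤ → A | ∀ (i : ℤ) (n : ℕ), (List.ofFn fun j : Fin n => p (i + j)) ∉ F}

section Aux

variable {A : Type*}

/-- A shift space is invariant under translations. -/
lemma shift_mem {X : Set (ℤ → A)} (hX : IsShiftSpace X) {p : ℤ → A} (hp : p ∈ X) (m : ℤ) :
    (fun i => p (m + i)) ∈ X := by
  obtain ⟨F, rfl⟩ := hX
  intro i n
  simpa [add_assoc] using hp (m + i) n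

/-- Master computation: at negative positions, `(y·x₁…x_k)·z` agrees with `y·x` shifted by `k`. -/
lemma master (y x z : ℕ → A) (k : ℕ) (s : ℤ) (hs : s < 0) :
    concat (leftAppend y (rayPrefix x k)) z s = concat y x (s + k) := by
  have h1 : ¬ (0 : ℤ) ≤ s := by omega
  simp only [concat, leftAppend, rayPrefix, h1, if_false, List.length_ofFn]
  by_cases h2 : (-(s + 1)).toNat < k
  · have h0 : (0:ℤ) ≤ s + k := by omega
    rw [dif_pos h2, if_pos h0]
    simp only [List.get_eq_getElem, List.getElem_reverse, List.getElem_ofFn, List.length_ofFn]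
    congr 1
    omega
  · have h0 : ¬ (0:ℤ) ≤ s + k := by omega
    rw [dif_neg h2, if_neg h0]
    congr 1
    omega

/-- The predecessor set of a right-ray is contained in that of each finite prefix. -/
lemma pray_subset_pword {X : Set (ℤ → A)} (hX : IsShiftSpace X) (x : ℕ → A) (k : ℕ) :
    Pray X x ⊆ Pword X (rayPrefix x k) := by
  intro y hy
  refine ⟨fun n => x (k + n), ?_⟩
  have hmem : (fun i : ℤ => concat y x ((k : ℤ) + i)) ∈ X := shift_mem hX hy k
  have heq : concat (leftAppend y (rayPrefix x k)) (fun n => x (k + n))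
      = fun i : ℤ => concat y x ((k : ℤ) + i) := by
    funext i
    by_cases hi : (0:ℤ) ≤ i
    · have hki : (0:ℤ) ≤ (k:ℤ) + i := by omega
      simp only [concat, if_pos hi, if_pos hki]
      congr 1
      omega
    · rw [master y x _ k i (by omega)]
      congr 1
      ring
  rw [heq]; exact hmem

/-- Monotonicity: longer prefixes have smaller predecessor sets. -/
lemma pword_antitone {X : Set (ℤ → A)} (hX : IsShiftSpace X) (x : ℕ → A) {k l : ℕ}
    (hkl : k ≤ l) : Pword X (rayPrefix x l) ⊆ Pword X (rayPrefix x k) := by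
  rintro y ⟨z, hz⟩
  set q : ℤ → A := concat (leftAppend y (rayPrefix x l)) z with hq
  refine ⟨fun n => q ((k : ℤ) - l + n), ?_⟩
  have hmem : (fun i : ℤ => q ((k : ℤ) - l + i)) ∈ X := shift_mem hX hz _
  have heq : concat (leftAppend y (rayPrefix x k)) (fun n => q ((k : ℤ) - l + n))
      = fun i : ℤ => q ((k : ℤ) - l + i) := by
    funext i
    by_cases hi : (0:ℤ) ≤ i
    · simp only [concat, if_pos hi]
      congr 1
      omega
    · rw [master y x _ k i (by omega), hq, master y x z l ((k:ℤ) - l + i) (by omega)]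
      congr 1
      ring
  rw [heq]; exact hmem

/-- If `y` is a predecessor of all sufficiently long prefixes of `x`, then it is a
predecessor of the ray `x` itself. -/
lemma mem_pray_of_forall {X : Set (ℤ → A)} (hX : IsShiftSpace X) (x y : ℕ → A) (n : ℕ)
    (hy : ∀ k ≥ n, y ∈ Pword X (rayPrefix x k)) : y ∈ Pray X x := by
  obtain ⟨F, hF⟩ := hX
  show concat y x ∈ X
  rw [hF]
  intro i m
  set k : ℕ := max n (i + m).toNat with hk
  obtain ⟨z, hz⟩ := hy k (le_max_left _ _)
  have hq : (fun t : ℤ => concat (leftAppend y (rayPrefix x k)) z (-(k:ℤ) + t)) ∈ X :=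
    shift_mem ⟨F, hF⟩ hz _
  rw [hF] at hq
  have hmem := hq i m
  have heq : (List.ofFn fun j : Fin m => concat y x (i + j))
      = List.ofFn fun j : Fin m =>
          concat (leftAppend y (rayPrefix x k)) z (-(k:ℤ) + (i + j)) := by
    refine congrArg _ (funext fun j => ?_)
    have hj : (j : ℕ) < m := j.2
    have hkb : (i + m : ℤ) ≤ (k : ℤ) := by
      have := le_max_right n (i + m).toNat
      omega
    rw [show -(k:ℤ) + (i + (j:ℤ)) = (i + (j:ℤ)) - k by ring,
      master y x z k ((i + (j:ℤ)) - k) (by omega)]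
    congr 1
    ring
  rw [heq]
  exact hmem

end Aux

/-- For a sofic shift `X` (a shift space whose words have only finitely many
distinct predecessor sets) and any right-ray `x⁺ ∈ X⁺`, there is an `n` such that the predecessor
set of the prefix `x₁…x_k` equals the predecessor set of `x⁺` for all `k ≥ n`. -/
theorem stmt0 {A : Type*} (X : Set (ℤ → A)) (hX : IsShiftSpace X)
    (hsofic : {P : Set (ℕ → A) | ∃ w : List A, P = Pword X w}.Finite) :
    ∀ x ∈ Xplus X, ∃ n : ℕ, ∀ k ≥ n, Pword X (rayPrefix x k) = Pray X x := by
  intro x _hx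
  set f : ℕ → Set (ℕ → A) := fun k => Pword X (rayPrefix x k) with hf
  have hfin : (Set.range f).Finite := hsofic.subset (by rintro _ ⟨k, rfl⟩; exact ⟨_, rfl⟩)
  have : Finite (Set.range f) := hfin
  obtain ⟨P, hP⟩ :=
    Finite.exists_infinite_fiber (fun k : ℕ => (⟨f k, ⟨k, rfl⟩⟩ : Set.range f))
  have hP' : ((fun k : ℕ => (⟨f k, ⟨k, rfl⟩⟩ : Set.range f)) ⁻¹' {P}).Infinite :=
    Set.infinite_coe_iff.mp hP
  obtain ⟨n, hn⟩ := hP'.nonempty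
  have hstab : ∀ k ≥ n, f k = f n := by
    intro k hk
    obtain ⟨m, hm, hmk⟩ := hP'.exists_gt k
    have h1 : f m ⊆ f k := pword_antitone hX x hmk.le
    have h2 : f k ⊆ f n := pword_antitone hX x hk
    have h3 : f m = f n := congrArg Subtype.val ((hm : _ = P).trans (hn : _ = P).symm)
    exact subset_antisymm h2 (h3 ▸ h1)
  refine ⟨n, fun k hk => ?_⟩
  rw [show Pword X (rayPrefix x k) = f k from rfl, hstab k hk]
  apply subset_antisymm
  · intro y hy
    refine mem_pray_of_forall hX x y n (fun l hl => ?_)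
    show y ∈ f l
    rw [hstab l hl]
    exact hy
  · exact pray_subset_pword hX x n
end

section
/- In the left Krieger cover of a sofic shift X, if P is a non-decomposable vertex (predecessor set), then the labelled subgraph induced by all vertices except P presents a strictly smaller language: there exist y⁻ ∈ X⁻ and x⁺ ∈ X⁺ with y⁻x⁺ ∈ X such that no presentation of y⁻ terminates at a vertex Q ≠ P with Q ⊆ P_∞(x⁺). Equivalently, P_∞(x⁺) is not contained in the union of the predecessor sets of the other vertices at which x⁺ has a presentation. -/
/-- The vertex set of the left Krieger cover: predecessor sets of right-rays of `X`. -/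
def KrgV {A : Type*} (X : Set (ℤ → A)) : Set (Set (ℕ → A)) :=
  {P | ∃ x ∈ Xplus X, P = Pray X x}

/-- A vertex `P` of the left Krieger cover is non-decomposable if whenever `P` is the union of a
family of vertices, `P` itself belongs to the family. -/
def NonDecomp {A : Type*} (X : Set (ℤ → A)) (P : Set (ℕ → A)) : Prop :=
  ∀ V : Set (Set (ℕ → A)), V ⊆ KrgV X → P = ⋃₀ V → P ∈ V

/-- Prepend a letter to a right-ray. -/
def consRay {A : Type*} (a : A) (x : ℕ → A) : ℕ → A :=
  fun n => if n = 0 then a else x (n - 1)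

/-- There is an edge labelled `a` from `P` to `Q` in the left Krieger cover iff there is a
right-ray `x⁺ ∈ X⁺` with `P = P_∞(ax⁺)` and `Q = P_∞(x⁺)`. -/
def KrgEdge {A : Type*} (X : Set (ℤ → A)) (a : A) (P Q : Set (ℕ → A)) : Prop :=
  ∃ x ∈ Xplus X, Pray X (consRay a x) = P ∧ Pray X x = Q

/-- The vertex set of the generalized left Fischer cover: vertices of the left Krieger cover
admitting a path to some non-decomposable vertex. -/
def GFC {A : Type*} (X : Set (ℤ → A)) : Set (Set (ℕ → A)) :=
  {P ∈ KrgV X | ∃ P' ∈ KrgV X, NonDecomp X P' ∧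
    Relation.ReflTransGen (fun U W => ∃ a : A, KrgEdge X a U W) P P'}

/-- If `P` is a non-decomposable vertex of the left Krieger cover of a sofic
shift `X`, then removing `P` loses part of the language: there are `x⁺ ∈ X⁺` and
`y⁻ ∈ X⁻` with `y⁻x⁺ ∈ X` and `P = P_∞(x⁺)` such that `y⁻` lies in no vertex `Q ≠ P` with
`Q ⊆ P_∞(x⁺)` (the vertices at which a presentation of `y⁻x⁺` could survive). -/
theorem stmt5 {A : Type*} (X : Set (ℤ → A)) (hX : IsShiftSpace X)
    (hsofic : (KrgV X).Finite)
    (P : Set (ℕ → A)) (hP : P ∈ KrgV X) (hnd : NonDecomp X P) :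
    ∃ x ∈ Xplus X, ∃ y : ℕ → A, concat y x ∈ X ∧ Pray X x = P ∧
      ∀ Q ∈ KrgV X, Q ≠ P → Q ⊆ Pray X x → y ∉ Q := by
  obtain ⟨x, hx, rfl⟩ := hP
  set V : Set (Set (ℕ → A)) := {Q | Q ∈ KrgV X ∧ Q ≠ Pray X x ∧ Q ⊆ Pray X x}
  have hVsub : V ⊆ KrgV X := fun Q hQ => hQ.1
  by_contra h
  push_neg at h
  have hcov : Pray X x = ⋃₀ V := by
    apply Set.Subset.antisymm
    · intro y hy
      obtain ⟨Q, hQK, hQne, hQsub, hyQ⟩ := h x hx y hy rfl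
      exact ⟨Q, ⟨hQK, hQne, hQsub⟩, hyQ⟩
    · intro y hy
      obtain ⟨Q, hQ, hyQ⟩ := hy
      exact hQ.2.2 hyQ
  have := hnd V hVsub hcov
  exact this.2.1 rfl
end

section
/- Let X be a sofic shift with left Krieger cover (K, L_K). If there is an edge labelled a from a non-decomposable vertex P to a decomposable vertex Q, then there exists a non-decomposable vertex Q' and an edge labelled a from P to Q'. -/

lemma leftAppend_single {A : Type*} (y : ℕ → A) (a : A) (n : ℕ) :
    leftAppend y [a] n = if n = 0 then a else y (n - 1) := by
  rcases n with _ | n <;> simp [leftAppend]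

lemma concat_cons {A : Type*} (y z : ℕ → A) (a : A) :
    concat (leftAppend y [a]) z = shiftZ (concat y (consRay a z)) := by
  funext i
  simp only [concat, shiftZ, consRay, leftAppend_single]
  split_ifs <;> first | rfl | (congr 1; omega) | omega

lemma shift_mem_s6 {A : Type*} {X : Set (ℤ → A)} (hX : IsShiftSpace X) (p : ℤ → A) :
    p ∈ X ↔ shiftZ p ∈ X := by
  obtain ⟨F, rfl⟩ := hX
  constructor
  · intro h i n
    have := h (i + 1) n
    convert this using 3 with j
    funext j; simp only [shiftZ]; congr 1; ring
  · intro h i n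
    have := h (i - 1) n
    convert this using 3 with j
    funext j; simp only [shiftZ]; congr 1; ring

lemma mem_Pray_cons {A : Type*} {X : Set (ℤ → A)} (hX : IsShiftSpace X)
    (y z : ℕ → A) (a : A) :
    y ∈ Pray X (consRay a z) ↔ leftAppend y [a] ∈ Pray X z := by
  simp only [Pray, Set.mem_setOf_eq, concat_cons]
  exact shift_mem_s6 hX _

lemma KrgV_nonempty {A : Type*} {X : Set (ℤ → A)} {Q : Set (ℕ → A)} (hQ : Q ∈ KrgV X) :
    Q.Nonempty := by
  obtain ⟨x, ⟨y, hy⟩, rfl⟩ := hQ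
  exact ⟨y, hy⟩

lemma decomp {A : Type*} {X : Set (ℤ → A)} (hfin : (KrgV X).Finite) :
    ∀ Q ∈ KrgV X, Q = ⋃₀ {R | R ∈ KrgV X ∧ R ⊆ Q ∧ NonDecomp X R} := by
  intro Q hQ
  haveI : IsStrictOrder (Set (ℕ → A)) (fun x1 x2 : Set (ℕ → A) => x1 < x2) :=
    { irrefl := lt_irrefl, trans := fun _ _ _ => lt_trans }
  refine Set.WellFoundedOn.induction (r := fun x1 x2 : Set (ℕ → A) => x1 < x2)
    (P := fun Q => Q = ⋃₀ {R | R ∈ KrgV X ∧ R ⊆ Q ∧ NonDecomp X R})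
    hfin.wellFoundedOn hQ ?_
  intro Q hQ IH
  by_cases hnd : NonDecomp X Q
  · apply Set.Subset.antisymm
    · exact Set.subset_sUnion_of_mem ⟨hQ, subset_rfl, hnd⟩
    · exact Set.sUnion_subset fun R hR => hR.2.1
  · simp only [NonDecomp, not_forall] at hnd
    obtain ⟨V, hVsub, hVeq, hQnotin⟩ := hnd
    apply Set.Subset.antisymm
    · intro y hy
      rw [hVeq] at hy
      obtain ⟨R, hRV, hyR⟩ := hy
      have hRQ : R ⊆ Q := hVeq ▸ Set.subset_sUnion_of_mem hRV
      have hRss : R ⊂ Q := hRQ.ssubset_of_ne (fun h => hQnotin (h ▸ hRV))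
      have := IH R (hVsub hRV) hRss
      rw [this] at hyR
      obtain ⟨S, ⟨hS1, hS2, hS3⟩, hyS⟩ := hyR
      exact ⟨S, ⟨hS1, hS2.trans hRQ, hS3⟩, hyS⟩
    · exact Set.sUnion_subset fun R hR => hR.2.1


/-- In the left Krieger cover of a sofic shift, if there is an edge labelled `a`
from a non-decomposable vertex `P` to a decomposable vertex `Q`, then there is a
non-decomposable vertex `Q'` and an edge labelled `a` from `P` to `Q'`. -/
theorem stmt6 {A : Type*} (X : Set (ℤ → A)) (hX : IsShiftSpace X)
    (hsofic : (KrgV X).Finite)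
    (P Q : Set (ℕ → A)) (a : A)
    (hP : P ∈ KrgV X) (hPnd : NonDecomp X P)
    (hQ : Q ∈ KrgV X) (hQdec : ¬ NonDecomp X Q)
    (hedge : KrgEdge X a P Q) :
    ∃ Q' ∈ KrgV X, NonDecomp X Q' ∧ KrgEdge X a P Q' := by
  obtain ⟨x, hxplus, hPx, hQx⟩ := hedge
  set W : Set (Set (ℕ → A)) := {R | R ∈ KrgV X ∧ R ⊆ Q ∧ NonDecomp X R} with hW
  have hQW : Q = ⋃₀ W := decomp hsofic Q hQ
  set V' : Set (Set (ℕ → A)) :=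
    {S | ∃ z : ℕ → A, Pray X z ∈ W ∧ S = Pray X (consRay a z) ∧ S.Nonempty} with hV'
  have hV'sub : V' ⊆ KrgV X := by
    rintro S ⟨z, hzW, rfl, y, hy⟩
    exact ⟨consRay a z, ⟨y, hy⟩, rfl⟩
  have hPV' : P = ⋃₀ V' := by
    apply Set.Subset.antisymm
    · intro y hy
      rw [← hPx] at hy
      have : leftAppend y [a] ∈ Q := hQx ▸ (mem_Pray_cons hX y x a).mp hy
      rw [hQW] at this
      obtain ⟨R, hRW, hyR⟩ := this
      obtain ⟨z, hz, rfl⟩ := hRW.1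
      have hyz : y ∈ Pray X (consRay a z) := (mem_Pray_cons hX y z a).mpr hyR
      exact ⟨Pray X (consRay a z), ⟨z, hRW, rfl, ⟨y, hyz⟩⟩, hyz⟩
    · rintro y ⟨S, ⟨z, hzW, rfl, -⟩, hyS⟩
      have : leftAppend y [a] ∈ Pray X z := (mem_Pray_cons hX y z a).mp hyS
      have hyQ : leftAppend y [a] ∈ Q := hzW.2.1 this
      rw [← hQx] at hyQ
      rw [← hPx]
      exact (mem_Pray_cons hX y x a).mpr hyQ
  have hPin : P ∈ V' := hPnd V' hV'sub hPV'
  obtain ⟨z, hzW, hPz, -⟩ := hPin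
  have hzplus : z ∈ Xplus X := by
    obtain ⟨y, hy⟩ := KrgV_nonempty hzW.1
    exact ⟨y, hy⟩
  exact ⟨Pray X z, hzW.1, hzW.2.2, z, hzplus, hPz.symm, rfl⟩
end

section
/- The generalized left Fischer cover of a sofic shift X is a presentation of X: every left-ray y⁻ ∈ X⁻ is the label of some left-infinite path in the generalized left Fischer cover. -/
/-- Shift invariance from `IsShiftSpace`. -/
lemma memX_of_shift {A : Type*} {X : Set (ℤ → A)} (hX : IsShiftSpace X)
    {q : ℤ → A} (h : shiftZ q ∈ X) : q ∈ X := by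
  obtain ⟨F, rfl⟩ := hX
  intro i n
  have h2 := h (i - 1) n
  have he : (List.ofFn fun j : Fin n => q (i + j)) =
      (List.ofFn fun j : Fin n => shiftZ q (i - 1 + j)) := by
    congr 1; funext j; simp only [shiftZ]; ring_nf
  rw [he]; exact h2

lemma shift_concat {A : Type*} (y : ℕ → A) (n : ℕ) (w : ℕ → A) :
    concat (fun k => y (k + n)) w
      = shiftZ (concat (fun k => y (k + (n + 1))) (consRay (y n) w)) := by
  funext i
  simp only [shiftZ, concat, consRay]
  rcases lt_trichotomy i (-1) with h | h | h
  · rw [if_neg (by omega), if_neg (by omega)]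
    congr 1; omega
  · subst h; norm_num
  · rw [if_pos (by omega), if_pos (by omega), if_neg (by omega)]
    congr 1; omega

/-- Every point of a vertex lies in some non-decomposable vertex. -/
lemma exists_nondecomp {A : Type*} {X : Set (ℤ → A)} (hfin : (KrgV X).Finite) :
    ∀ P ∈ KrgV X, ∀ y ∈ P, ∃ Q ∈ KrgV X, NonDecomp X Q ∧ y ∈ Q := by
  have main : ∀ m : ℕ, ∀ P ∈ KrgV X, ({Q | Q ∈ KrgV X ∧ Q ⊆ P}).ncard ≤ m →
      ∀ y ∈ P, ∃ Q ∈ KrgV X, NonDecomp X Q ∧ y ∈ Q := by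
    intro m
    induction m with
    | zero =>
      intro P hP hcard y hy
      exfalso
      have hfin' : {Q | Q ∈ KrgV X ∧ Q ⊆ P}.Finite := hfin.subset (fun Q hQ => hQ.1)
      have hpos : 0 < ({Q | Q ∈ KrgV X ∧ Q ⊆ P}).ncard :=
        (Set.ncard_pos hfin').mpr ⟨P, hP, subset_rfl⟩
      omega
    | succ m ih =>
      intro P hP hcard y hy
      by_cases hnd : NonDecomp X P
      · exact ⟨P, hP, hnd, hy⟩
      · simp only [NonDecomp, not_forall] at hnd
        obtain ⟨V, hVsub, hPU, hPnV⟩ := hnd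
        have hy' : y ∈ ⋃₀ V := hPU ▸ hy
        obtain ⟨Q, hQV, hyQ⟩ := hy'
        have hQK : Q ∈ KrgV X := hVsub hQV
        have hQP : Q ⊆ P := hPU ▸ Set.subset_sUnion_of_mem hQV
        have hne : Q ≠ P := fun h => hPnV (h ▸ hQV)
        have hss : {R | R ∈ KrgV X ∧ R ⊆ Q} ⊂ {R | R ∈ KrgV X ∧ R ⊆ P} := by
          constructor
          · rintro R ⟨h1, h2⟩; exact ⟨h1, h2.trans hQP⟩
          · intro hcontra
            have hPQ : P ⊆ Q := (hcontra ⟨hP, subset_rfl⟩).2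
            exact hne (le_antisymm hQP hPQ)
        have hlt : ({R | R ∈ KrgV X ∧ R ⊆ Q}).ncard < ({R | R ∈ KrgV X ∧ R ⊆ P}).ncard :=
          Set.ncard_lt_ncard hss (hfin.subset (fun R hR => hR.1))
        exact ih Q hQK (by omega) y hyQ
  intro P hP y hy
  exact main ({Q | Q ∈ KrgV X ∧ Q ⊆ P}).ncard P hP le_rfl y hy

/-- Iterated prepending of the letters of a left-ray to a right-ray. -/
def Wseq {A : Type*} (y : ℕ → A) (w₀ : ℕ → A) : ℕ → ℕ → A
  | 0 => w₀
  | n + 1 => consRay (y n) (Wseq y w₀ n)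

/-- The generalized left Fischer cover of a sofic shift `X` is a presentation of
`X`: every left-ray `y⁻ ∈ X⁻` is the label of a left-infinite path in the generalized left
Fischer cover (the path `… → Ps (n+1) → Ps n → … → Ps 0` carries the letter `y n` on the edge
from `Ps (n+1)` to `Ps n`). -/
theorem stmt8 {A : Type*} (X : Set (ℤ → A)) (hX : IsShiftSpace X)
    (hsofic : (KrgV X).Finite) :
    ∀ y ∈ Xminus X, ∃ Ps : ℕ → Set (ℕ → A),
      (∀ n, Ps n ∈ GFC X) ∧ (∀ n, KrgEdge X (y n) (Ps (n + 1)) (Ps n)) := by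
  intro y hy
  obtain ⟨x, hx⟩ := hy
  have hP : Pray X x ∈ KrgV X := ⟨x, ⟨y, hx⟩, rfl⟩
  obtain ⟨Q, hQK, hQnd, hyQ⟩ := exists_nondecomp hsofic _ hP y hx
  obtain ⟨w₀, hw₀, rfl⟩ := hQK
  have hWmem : ∀ n, concat (fun k => y (k + n)) (Wseq y w₀ n) ∈ X := by
    intro n
    induction n with
    | zero =>
      have : (fun k => y (k + 0)) = y := by funext k; simp
      rw [this]; exact hyQ
    | succ n ih =>
      have hsh : shiftZ (concat (fun k => y (k + (n + 1))) (consRay (y n) (Wseq y w₀ n))) ∈ X := by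
        rw [← shift_concat]; exact ih
      exact memX_of_shift hX hsh
  have hWplus : ∀ n, Wseq y w₀ n ∈ Xplus X := fun n => ⟨_, hWmem n⟩
  refine ⟨fun n => Pray X (Wseq y w₀ n), ?_, ?_⟩
  · intro n
    refine ⟨⟨Wseq y w₀ n, hWplus n, rfl⟩, Pray X w₀, ⟨w₀, hw₀, rfl⟩, hQnd, ?_⟩
    induction n with
    | zero => exact Relation.ReflTransGen.refl
    | succ n ih =>
      exact Relation.ReflTransGen.head ⟨y n, Wseq y w₀ n, hWplus n, rfl, rfl⟩ ih
  · intro n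
    exact ⟨Wseq y w₀ n, hWplus n, rfl, rfl⟩
end

section
/- If a sofic shift X has the property that the left Krieger cover equals the maximal essential subgraph of the past set cover, then X satisfies Condition (*). -/
/-- The language `B(X)` of `X`: words occurring (at position 0) in some point of `X`. -/
def Blang {A : Type*} (X : Set (ℤ → A)) : Set (List A) :=
  {w | ∃ p ∈ X, ∀ i : Fin w.length, p (i : ℕ) = w.get i}

/-- Prepend a finite word to a right-ray. -/
def wordRay {A : Type*} (w : List A) (x : ℕ → A) : ℕ → A :=
  fun n => if h : n < w.length then w.get ⟨n, h⟩ else x (n - w.length)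

/-- `P_l(w)`: words of length at most `l` which can precede the word `w`. -/
def Pl {A : Type*} (X : Set (ℤ → A)) (l : ℕ) (w : List A) : Set (List A) :=
  {v | v.length ≤ l ∧ (v ++ w) ∈ Blang X}

/-- `P_l(x⁺)`: words of length at most `l` which can precede the right-ray `x⁺`. -/
def PlRay {A : Type*} (X : Set (ℤ → A)) (l : ℕ) (x : ℕ → A) : Set (List A) :=
  {v | v.length ≤ l ∧ wordRay v x ∈ Xplus X}

/-- Condition (*) of Carlsen and Matsumoto. -/
def CondStar {A : Type*} (X : Set (ℤ → A)) : Prop :=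
  ∀ (l : ℕ) (F : Set (List A)), F ⊆ Blang X → F.Infinite →
    (∀ u ∈ F, ∀ v ∈ F, Pl X l u = Pl X l v) →
    ∃ x ∈ Xplus X, ∀ w ∈ F, Pl X l w = PlRay X l x

/-- The vertex set of the past set cover: predecessor sets of words of `X`. -/
def PscV {A : Type*} (X : Set (ℤ → A)) : Set (Set (ℕ → A)) :=
  {P | ∃ w ∈ Blang X, P = Pword X w}

/-- The edge labelled `a` from `P` to `Q` in the past set cover. -/
def PscEdge {A : Type*} (X : Set (ℤ → A)) (a : A) (P Q : Set (ℕ → A)) : Prop :=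
  ∃ w ∈ Blang X, (a :: w) ∈ Blang X ∧ Pword X (a :: w) = P ∧ Pword X w = Q

/-- An essential subgraph of the past set cover: a set of vertices each of which emits an edge
into the set and receives an edge from the set. -/
def EssentialSub {A : Type*} (X : Set (ℤ → A)) (H : Set (Set (ℕ → A))) : Prop :=
  H ⊆ PscV X ∧ ∀ P ∈ H,
    (∃ (a : A) (Q : Set (ℕ → A)), Q ∈ H ∧ PscEdge X a P Q) ∧
    (∃ (a : A) (Q : Set (ℕ → A)), Q ∈ H ∧ PscEdge X a Q P)

/-- If every vertex of the past set cover of a sofic shift `X` which is the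
predecessor set of infinitely many words is a vertex of the left Krieger cover (i.e. the left
Krieger cover is the maximal essential subgraph of the past set cover), then `X` satisfies
Condition (*). -/
theorem stmt15 {A : Type*} (X : Set (ℤ → A)) (hX : IsShiftSpace X)
    (hsofic : {P : Set (ℕ → A) | ∃ w : List A, P = Pword X w}.Finite)
    (hPl_word : ∀ (l : ℕ) (u v : List A), Pword X u = Pword X v → Pl X l u = Pl X l v)
    (hPl_ray : ∀ (l : ℕ) (w : List A) (x : ℕ → A), x ∈ Xplus X →
      Pword X w = Pray X x → Pl X l w = PlRay X l x)
    (hmax : ∀ P : Set (ℕ → A), {w : List A | w ∈ Blang X ∧ Pword X w = P}.Infinite →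
      ∃ x ∈ Xplus X, Pray X x = P) :
    CondStar X := by
  intro l F hFB hFinf hpair
  -- pigeonhole: some predecessor set occurs for infinitely many words of F
  have key : ∃ P, {w : List A | w ∈ F ∧ Pword X w = P}.Infinite := by
    by_contra h
    push_neg at h
    have hfin : F.Finite := by
      have hcov : F ⊆ ⋃ P ∈ {P : Set (ℕ → A) | ∃ w : List A, P = Pword X w},
          {w : List A | w ∈ F ∧ Pword X w = P} := by
        intro w hw
        exact Set.mem_biUnion ⟨w, rfl⟩ ⟨hw, rfl⟩
      exact Set.Finite.subset (Set.Finite.biUnion hsofic fun P _ => h P) hcov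
    exact hFinf hfin
  obtain ⟨P, hP⟩ := key
  have hsub : {w : List A | w ∈ F ∧ Pword X w = P} ⊆
      {w : List A | w ∈ Blang X ∧ Pword X w = P} := fun w hw => ⟨hFB hw.1, hw.2⟩
  obtain ⟨x, hx, hxP⟩ := hmax P (hP.mono hsub)
  obtain ⟨w₀, hw₀⟩ := hP.nonempty
  refine ⟨x, hx, fun w hw => ?_⟩
  have h1 : Pl X l w = Pl X l w₀ := hpair w hw w₀ hw₀.1
  have h2 : Pl X l w₀ = PlRay X l x := hPl_ray l w₀ x hx (hw₀.2.trans hxP.symm)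
  exact h1.trans h2
end

section
/- If the left Krieger cover of a sofic shift is a reducible directed graph (there exist two vertices u, v with no path from u to v), and the left Krieger cover is a foundation of the past set cover in the layered sense, then the past set cover is also reducible. -/
/-- Suppose the past set cover `W` is layered over the left Krieger cover `K`:
there is a layer function on the vertices of `W` taking values `≥ 1` which never decreases along
edges, the first layer is (the image of) an embedded copy of `K`, and edges within the first
layer correspond exactly to edges of `K`.  If `K` is reducible (some ordered pair of vertices is
not joined by a directed path), then `W` is reducible as well. -/
theorem stmt16 {VK VW : Type*} (adjK : VK → VK → Prop) (adjW : VW → VW → Prop)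
    (layer : VW → ℕ) (hpos : ∀ w : VW, 1 ≤ layer w)
    (hmono : ∀ u v : VW, adjW u v → layer u ≤ layer v)
    (ι : VK → VW) (hinj : Function.Injective ι)
    (hlayer : ∀ w : VW, layer w = 1 ↔ ∃ k : VK, ι k = w)
    (hedge : ∀ u v : VK, adjK u v ↔ adjW (ι u) (ι v))
    (hred : ¬ ∀ u v : VK, Relation.ReflTransGen adjK u v) :
    ¬ ∀ p q : VW, Relation.ReflTransGen adjW p q := by
  intro hall
  apply hred
  intro u v
  have hmonopath : ∀ a b : VW, Relation.ReflTransGen adjW a b → layer a ≤ layer b := by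
    intro a b hab
    induction hab with
    | refl => exact le_refl _
    | tail _ hbc ih => exact le_trans ih (hmono _ _ hbc)
  have key : ∀ p : VW, Relation.ReflTransGen adjW p (ι v) → ∀ k : VK, ι k = p →
      Relation.ReflTransGen adjK k v := by
    intro p hp
    induction hp using Relation.ReflTransGen.head_induction_on with
    | refl =>
      intro k hk
      rw [hinj hk]
    | @head a b hstep hbv ih =>
      intro k hk
      subst hk
      have hb1 : layer b = 1 := by
        have h2 : layer b ≤ layer (ι v) := hmonopath _ _ hbv
        have h3 : layer (ι v) = 1 := (hlayer _).2 ⟨v, rfl⟩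
        have h4 := hpos b
        omega
      obtain ⟨k', hk'⟩ := (hlayer b).1 hb1
      subst hk'
      exact Relation.ReflTransGen.head ((hedge k k').2 hstep) (ih k' rfl)
  exact key (ι u) (hall _ _) u rfl
end
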